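/- If strings s_0, ..., s_{m-1} are each terminated by a unique separator symbol #_i not occurring elsewhere, then in the LZ78 parsing of the concatenation S = s_0 s_1 ... s_{m-1}, every phrase containing a separator symbol ends exactly at that separator; consequently each string boundary coincides with a phrase boundary. -/

import Mathlib

/-- `p` is a longest element of `D` that is a prefix of `s`. -/
def IsLongestPrefIn {α : Type*} (D : Set (List α)) (s p : List α) : Prop :=
  p ∈ D ∧ p <+: s ∧ ∀ q ∈ D, q <+: s → q.length ≤ p.length

/-- LZ78 parsing: `LZ78 s D ps D'` means that parsing the input `s` starting
with phrase dictionary `D` produces the list of phrases `ps` and final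
dictionary `D'`. -/
inductive LZ78 {α : Type*} : List α → Set (List α) → List (List α) → Set (List α) → Prop
  | nil (D : Set (List α)) : LZ78 [] D [] D
  | last {s : List α} {D : Set (List α)} :
      s ≠ [] → IsLongestPrefIn D s s → LZ78 s D [s] D
  | step {s : List α} {D : Set (List α)} {p : List α} {a : α} {ps : List (List α)}
      {D' : Set (List α)} :
      IsLongestPrefIn D s p → s[p.length]? = some a →
      LZ78 (s.drop (p.length + 1)) (insert (p ++ [a]) D) ps D' →
      LZ78 s D ((p ++ [a]) :: ps) D'

/-- If the strings `str 0, ..., str (m-1)` are each terminated by a unique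
separator symbol `sep i` occurring nowhere else in the concatenation
`S = str 0 ++ ... ++ str (m-1)`, then in the LZ78 parsing of `S` every phrase
containing a separator symbol ends exactly at that separator, and consequently
every string boundary coincides with a phrase boundary. -/

lemma lz_decomp {α : Type*} {D : Set (List α)} {s p : List α} {a : α}
    (hp : IsLongestPrefIn D s p) (ha : s[p.length]? = some a) :
    s = p ++ a :: s.drop (p.length + 1) := by
  obtain ⟨t, rfl⟩ := hp.2.1
  rw [List.getElem?_append_right (le_refl _)] at ha
  simp at ha
  cases t with
  | nil => simp at ha
  | cons b t' => simp_all [List.drop_append]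

lemma lz_flatten {α : Type*} {s : List α} {D : Set (List α)} {ps : List (List α)}
    {D' : Set (List α)} (h : LZ78 s D ps D') : ps.flatten = s := by
  induction h with
  | nil => rfl
  | last hne hp => simp
  | step hp ha h ih =>
    rename_i s D p a ps D'
    conv_rhs => rw [lz_decomp hp ha]
    simp [ih]

lemma lz_core {α : Type*} [DecidableEq α] (c : α) {s : List α} {D : Set (List α)}
    {ps : List (List α)} {D' : Set (List α)} (h : LZ78 s D ps D') :
    s.count c ≤ 1 → (∀ d ∈ D, c ∈ d → c ∉ s) →
    ∀ p ∈ ps, c ∈ p → ∃ q, p = q ++ [c] := by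
  induction h with
  | nil => intro _ _ p hp; simp at hp
  | last hne hp =>
    intro hcount hD p hmem hcp
    simp at hmem; subst hmem
    exact absurd hcp (hD _ hp.1 hcp)
  | step hp ha h ih =>
    rename_i s D p a ps D'
    intro hcount hD p' hmem hcp'
    have hdecomp := lz_decomp hp ha
    have hcnp : c ∉ p := fun hcp =>
      hD p hp.1 hcp (hp.2.1.subset hcp)
    rcases List.mem_cons.mp hmem with rfl | hmem'
    · have : c = a := by
        rcases List.mem_append.mp hcp' with h1 | h1
        · exact absurd h1 hcnp
        · simpa using h1
      exact ⟨p, by rw [this]⟩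
    · have hcount' : (s.drop (p.length + 1)).count c ≤ 1 :=
        le_trans (List.Sublist.count_le c (List.drop_sublist _ _)) hcount
      have hD' : ∀ d ∈ insert (p ++ [a]) D, c ∈ d → c ∉ s.drop (p.length + 1) := by
        intro d hd hcd
        rcases hd with rfl | hd
        · have hca : c = a := by
            rcases List.mem_append.mp hcd with h1 | h1
            · exact absurd h1 hcnp
            · simpa using h1
          subst hca
          have : s.count c = p.count c + 1 + (s.drop (p.length + 1)).count c := by
            conv_lhs => rw [hdecomp]
            simp [List.count_cons]
            ring
          intro hmem
          have := List.count_pos_iff.mpr hmem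
          omega
        · intro hmem
          exact hD d hd hcd (List.mem_of_mem_drop hmem)
      exact ih hcount' hD' p' hmem' hcp'

lemma take_flatten_ends {α : Type*} (ps : List (List α)) (c : α)
    (hmem : c ∈ ps.flatten) (hend : ∀ p ∈ ps, c ∈ p → ∃ q, p = q ++ [c]) :
    ∃ k q, (ps.take k).flatten = q ++ [c] := by
  induction ps with
  | nil => simp at hmem
  | cons p ps ih =>
    by_cases hcp : c ∈ p
    · obtain ⟨q, hq⟩ := hend p (by simp) hcp
      exact ⟨1, q, by simpa using hq⟩
    · have hmem' : c ∈ ps.flatten := by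
        rcases List.mem_flatten.mp hmem with ⟨l, hl, hcl⟩
        rcases List.mem_cons.mp hl with rfl | hl
        · exact absurd hcl hcp
        · exact List.mem_flatten.mpr ⟨l, hl, hcl⟩
      obtain ⟨k, q, hq⟩ := ih hmem' (fun p' hp' => hend p' (by simp [hp']))
      exact ⟨k + 1, p ++ q, by simp [hq]⟩

lemma prefix_end_unique {α : Type*} [DecidableEq α] {S P T : List α} {c : α}
    (hcount : S.count c ≤ 1) (hP : P <+: S) (hT : T <+: S)
    (hPe : ∃ q, P = q ++ [c]) (hTe : ∃ q, T = q ++ [c]) : P = T := by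
  have aux : ∀ {A B : List α}, A <+: B → B <+: S → (∃ q, A = q ++ [c]) →
      (∃ q, B = q ++ [c]) → A = B := by
    intro A B hAB hBS ⟨qa, hqa⟩ ⟨qb, hqb⟩
    obtain ⟨r, rfl⟩ := hAB
    cases r with
    | nil => simp
    | cons x r' =>
      exfalso
      have h1 : c ∈ A := by rw [hqa]; simp
      have h2 : c ∈ x :: r' := by
        have : (A ++ x :: r').getLast? = some c := by rw [hqb]; simp
        rw [List.getLast?_append_of_ne_nil A (by simp : (x :: r') ≠ [])] at this
        obtain ⟨hne, heq⟩ := List.mem_getLast?_eq_getLast this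
        exact heq ▸ List.getLast_mem hne
      have : 2 ≤ (A ++ x :: r').count c := by
        rw [List.count_append]
        have := List.count_pos_iff.mpr h1
        have := List.count_pos_iff.mpr h2
        omega
      have := le_trans (List.Sublist.count_le c hBS.sublist) hcount
      omega
  rcases List.prefix_or_prefix_of_prefix hP hT with h | h
  · exact aux h hT hPe hTe
  · exact (aux h hP hTe hPe).symm

lemma flatten_take_prefix {α : Type*} (l : List (List α)) (k : ℕ) :
    (l.take k).flatten <+: l.flatten :=
  ⟨(l.drop k).flatten, by rw [← List.flatten_append, List.take_append_drop]⟩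

theorem lz78_separators_end_phrases {α : Type*} [DecidableEq α]
    (m : ℕ) (str : ℕ → List α) (sep : ℕ → α)
    (hne : ∀ i < m, str i ≠ [])
    (hlast : ∀ i < m, (str i).getLast? = some (sep i))
    (hsep_inj : ∀ i < m, ∀ j < m, sep i = sep j → i = j)
    (S : List α) (hS : S = ((List.range m).map str).flatten)
    (honce : ∀ i < m, S.count (sep i) = 1)
    (ps : List (List α)) (D' : Set (List α))
    (h : LZ78 S {([] : List α)} ps D') :
    (∀ p ∈ ps, ∀ i < m, sep i ∈ p → ∃ q : List α, p = q ++ [sep i]) ∧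
      (∀ i ≤ m, ∃ k : ℕ, (ps.take k).flatten = (((List.range m).map str).take i).flatten) := by
  have part1 : ∀ p ∈ ps, ∀ i < m, sep i ∈ p → ∃ q : List α, p = q ++ [sep i] := by
    intro p hp i hi hmem
    refine lz_core (sep i) h (le_of_eq (honce i hi)) ?_ p hp hmem
    intro d hd hcd
    simp only [Set.mem_singleton_iff] at hd
    subst hd; simp at hcd
  refine ⟨part1, ?_⟩
  intro i hi
  cases i with
  | zero => exact ⟨0, by simp⟩
  | succ j =>
    have hj : j < m := hi
    have hTdecomp : (((List.range m).map str).take (j+1)).flatten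
        = (((List.range m).map str).take j).flatten ++ str j := by
      rw [List.take_succ]
      simp [List.getElem?_map, List.getElem?_range hj]
    obtain ⟨q0, hq0⟩ := List.getLast?_eq_some_iff.mp (hlast j hj)
    have hTend : ∃ q, (((List.range m).map str).take (j+1)).flatten = q ++ [sep j] :=
      ⟨_ ++ q0, by rw [hTdecomp, hq0, List.append_assoc]⟩
    have hTpre : (((List.range m).map str).take (j+1)).flatten <+: S := by
      rw [hS]; exact flatten_take_prefix _ _
    have hcS : sep j ∈ S := List.count_pos_iff.mp (by rw [honce j hj]; norm_num)
    have hflat := lz_flatten h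
    obtain ⟨k, q, hk⟩ := take_flatten_ends ps (sep j) (by rw [hflat]; exact hcS)
      (fun p hp => part1 p hp j hj)
    have hkpre : (ps.take k).flatten <+: S := by
      rw [← hflat]; exact flatten_take_prefix _ _
    exact ⟨k, prefix_end_unique (le_of_eq (honce j hj)) hkpre hTpre ⟨q, hk⟩ hTend⟩
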